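/- The sequent H₁, ..., Hₙ ⊢ A has a classical proof if and only if the sequent ⊢ ‖H₁‖ ⇒ᶜ ... ⇒ᶜ ‖Hₙ‖ ⇒ᶜ ‖A‖ has a constructive proof, where B ⇒ᶜ C abbreviates ¬¬((¬¬B) ⇒ (¬¬C)). -/

import Mathlib

/-- Terms: de Bruijn variables and a binary function symbol (union). -/
inductive Tm : Type where
  | var : Nat → Tm
  | cup : Tm → Tm → Tm
deriving DecidableEq

def Tm.rename (f : Nat → Nat) : Tm → Tm
  | .var n => .var (f n)
  | .cup s t => .cup (s.rename f) (t.rename f)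

def Tm.subst (σ : Nat → Tm) : Tm → Tm
  | .var n => σ n
  | .cup s t => .cup (s.subst σ) (t.subst σ)

/-- First-order formulas over Nat-indexed predicate symbols, de Bruijn binders. -/
inductive Fm : Type where
  | atom : Nat → List Tm → Fm
  | top : Fm
  | bot : Fm
  | neg : Fm → Fm
  | and : Fm → Fm → Fm
  | or : Fm → Fm → Fm
  | imp : Fm → Fm → Fm
  | all : Fm → Fm
  | ex : Fm → Fm
deriving DecidableEq

def liftR (f : Nat → Nat) : Nat → Nat
  | 0 => 0
  | n + 1 => f n + 1

def liftS (σ : Nat → Tm) : Nat → Tm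
  | 0 => .var 0
  | n + 1 => (σ n).rename Nat.succ

def Fm.rename (f : Nat → Nat) : Fm → Fm
  | .atom p l => .atom p (l.map (Tm.rename f))
  | .top => .top
  | .bot => .bot
  | .neg A => .neg (A.rename f)
  | .and A B => .and (A.rename f) (B.rename f)
  | .or A B => .or (A.rename f) (B.rename f)
  | .imp A B => .imp (A.rename f) (B.rename f)
  | .all A => .all (A.rename (liftR f))
  | .ex A => .ex (A.rename (liftR f))

def Fm.subst (σ : Nat → Tm) : Fm → Fm
  | .atom p l => .atom p (l.map (Tm.subst σ))
  | .top => .top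
  | .bot => .bot
  | .neg A => .neg (A.subst σ)
  | .and A B => .and (A.subst σ) (B.subst σ)
  | .or A B => .or (A.subst σ) (B.subst σ)
  | .imp A B => .imp (A.subst σ) (B.subst σ)
  | .all A => .all (A.subst (liftS σ))
  | .ex A => .ex (A.subst (liftS σ))

/-- Shift all free variables up by one. -/
def Fm.shift (A : Fm) : Fm := A.rename Nat.succ

/-- Instantiate the outermost bound variable with term `t` : `(t/x)A`. -/
def Fm.inst (t : Tm) (A : Fm) : Fm :=
  A.subst (fun n => match n with | 0 => t | n + 1 => .var n)

/-- Double negation. -/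
def Fm.dn (A : Fm) : Fm := .neg (.neg A)

/-- Cut-free classical multi-conclusion sequent calculus (Figure 1). -/
inductive Cl : List Fm → List Fm → Prop where
  | ax (A : Fm) : Cl [A] [A]
  | perm {Γ Γ' Δ Δ'} : Γ.Perm Γ' → Δ.Perm Δ' → Cl Γ Δ → Cl Γ' Δ'
  | contrL {Γ Δ A} : Cl (A :: A :: Γ) Δ → Cl (A :: Γ) Δ
  | contrR {Γ Δ A} : Cl Γ (A :: A :: Δ) → Cl Γ (A :: Δ)
  | weakL {Γ Δ A} : Cl Γ Δ → Cl (A :: Γ) Δ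
  | weakR {Γ Δ A} : Cl Γ Δ → Cl Γ (A :: Δ)
  | topR {Γ Δ} : Cl Γ (.top :: Δ)
  | botL {Γ Δ} : Cl (.bot :: Γ) Δ
  | negL {Γ Δ A} : Cl Γ (A :: Δ) → Cl (.neg A :: Γ) Δ
  | negR {Γ Δ A} : Cl (A :: Γ) Δ → Cl Γ (.neg A :: Δ)
  | andL {Γ Δ A B} : Cl (A :: B :: Γ) Δ → Cl (.and A B :: Γ) Δ
  | andR {Γ Δ A B} : Cl Γ (A :: Δ) → Cl Γ (B :: Δ) → Cl Γ (.and A B :: Δ)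
  | orL {Γ Δ A B} : Cl (A :: Γ) Δ → Cl (B :: Γ) Δ → Cl (.or A B :: Γ) Δ
  | orR1 {Γ Δ A B} : Cl Γ (A :: Δ) → Cl Γ (.or A B :: Δ)
  | orR2 {Γ Δ A B} : Cl Γ (B :: Δ) → Cl Γ (.or A B :: Δ)
  | impL {Γ Δ A B} : Cl Γ (A :: Δ) → Cl (B :: Γ) Δ → Cl (.imp A B :: Γ) Δ
  | impR {Γ Δ A B} : Cl (A :: Γ) (B :: Δ) → Cl Γ (.imp A B :: Δ)
  | allL {Γ Δ A} (t : Tm) : Cl (A.inst t :: Γ) Δ → Cl (.all A :: Γ) Δ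
  | allR {Γ Δ A} : Cl (Γ.map Fm.shift) (A :: Δ.map Fm.shift) → Cl Γ (.all A :: Δ)
  | exL {Γ Δ A} : Cl (A :: Γ.map Fm.shift) (Δ.map Fm.shift) → Cl (.ex A :: Γ) Δ
  | exR {Γ Δ A} (t : Tm) : Cl Γ (A.inst t :: Δ) → Cl Γ (.ex A :: Δ)

/-- Constructive (intuitionistic) single-conclusion sequent calculus:
the restriction of the classical calculus to sequents with at most one
conclusion, with the adapted ⇒-left rule. -/
inductive Intu : List Fm → Option Fm → Prop where
  | ax (A : Fm) : Intu [A] (some A)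
  | perm {Γ Γ' Δ} : Γ.Perm Γ' → Intu Γ Δ → Intu Γ' Δ
  | contrL {Γ Δ A} : Intu (A :: A :: Γ) Δ → Intu (A :: Γ) Δ
  | weakL {Γ Δ A} : Intu Γ Δ → Intu (A :: Γ) Δ
  | weakR {Γ A} : Intu Γ none → Intu Γ (some A)
  | topR {Γ} : Intu Γ (some .top)
  | botL {Γ Δ} : Intu (.bot :: Γ) Δ
  | negL {Γ A} : Intu Γ (some A) → Intu (.neg A :: Γ) none
  | negR {Γ A} : Intu (A :: Γ) none → Intu Γ (some (.neg A))
  | andL {Γ Δ A B} : Intu (A :: B :: Γ) Δ → Intu (.and A B :: Γ) Δ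
  | andR {Γ A B} : Intu Γ (some A) → Intu Γ (some B) → Intu Γ (some (.and A B))
  | orL {Γ Δ A B} : Intu (A :: Γ) Δ → Intu (B :: Γ) Δ → Intu (.or A B :: Γ) Δ
  | orR1 {Γ A B} : Intu Γ (some A) → Intu Γ (some (.or A B))
  | orR2 {Γ A B} : Intu Γ (some B) → Intu Γ (some (.or A B))
  | impL {Γ Δ A B} : Intu Γ (some A) → Intu (B :: Γ) Δ → Intu (.imp A B :: Γ) Δ
  | impR {Γ A B} : Intu (A :: Γ) (some B) → Intu Γ (some (.imp A B))
  | allL {Γ Δ A} (t : Tm) : Intu (A.inst t :: Γ) Δ → Intu (.all A :: Γ) Δ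
  | allR {Γ A} : Intu (Γ.map Fm.shift) (some A) → Intu Γ (some (.all A))
  | exL {Γ Δ A} : Intu (A :: Γ.map Fm.shift) (Δ.map Fm.shift) → Intu (.ex A :: Γ) Δ
  | exR {Γ A} (t : Tm) : Intu Γ (some (A.inst t)) → Intu Γ (some (.ex A))

/-- Dowek's translation ‖·‖: double negations both before and after each
connective and quantifier, atoms unchanged. -/
def Fm.bar : Fm → Fm
  | .atom p l => .atom p l
  | .top => Fm.dn .top
  | .bot => Fm.dn .bot
  | .neg A => Fm.dn (Fm.dn (.neg A.bar))
  | .and A B => Fm.dn (.and (Fm.dn A.bar) (Fm.dn B.bar))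
  | .or A B => Fm.dn (.or (Fm.dn A.bar) (Fm.dn B.bar))
  | .imp A B => Fm.dn (.imp (Fm.dn A.bar) (Fm.dn B.bar))
  | .all A => Fm.dn (.all (Fm.dn A.bar))
  | .ex A => Fm.dn (.ex (Fm.dn A.bar))

/-- The light translation |·|: like ‖·‖ but the outermost double negation
is removed. -/
def Fm.light : Fm → Fm
  | .atom p l => .atom p l
  | .top => .top
  | .bot => .bot
  | .neg A => .neg (Fm.dn A.bar)
  | .and A B => .and (Fm.dn A.bar) (Fm.dn B.bar)
  | .or A B => .or (Fm.dn A.bar) (Fm.dn B.bar)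
  | .imp A B => .imp (Fm.dn A.bar) (Fm.dn B.bar)
  | .all A => .all (Fm.dn A.bar)
  | .ex A => .ex (Fm.dn A.bar)

/-- A formula is atomic if it is of the form `atom p l`. -/
def Fm.isAtom : Fm → Prop
  | .atom _ _ => True
  | _ => False


/-- Classical implication `B ⇒ᶜ C = ¬¬((¬¬B) ⇒ (¬¬C))`. -/
def Fm.impc (B C : Fm) : Fm := Fm.dn (.imp (Fm.dn B) (Fm.dn C))

open Fm

/-! ### Term and formula substitution lemmas -/

theorem Tm.subst_rename (σ : Nat → Tm) (f : Nat → Nat) :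
    ∀ t : Tm, (t.rename f).subst σ = t.subst (fun n => σ (f n))
  | .var n => rfl
  | .cup s t => by simp [Tm.rename, Tm.subst, Tm.subst_rename]

theorem liftS_liftR (σ : Nat → Tm) (f : Nat → Nat) :
    (fun n => liftS σ (liftR f n)) = liftS (fun n => σ (f n)) := by
  funext n; cases n <;> rfl

theorem Fm.subst_rename (σ : Nat → Tm) (f : Nat → Nat) :
    ∀ A : Fm, (A.rename f).subst σ = A.subst (fun n => σ (f n))
  | .atom p l => by
      simp only [Fm.rename, Fm.subst, List.map_map]
      congr 1
      exact List.map_congr_left (fun t _ => Tm.subst_rename σ f t)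
  | .top => rfl
  | .bot => rfl
  | .neg A => by simp [Fm.rename, Fm.subst, Fm.subst_rename]
  | .and A B => by simp [Fm.rename, Fm.subst, Fm.subst_rename]
  | .or A B => by simp [Fm.rename, Fm.subst, Fm.subst_rename]
  | .imp A B => by simp [Fm.rename, Fm.subst, Fm.subst_rename]
  | .all A => by simp [Fm.rename, Fm.subst, Fm.subst_rename, liftS_liftR]
  | .ex A => by simp [Fm.rename, Fm.subst, Fm.subst_rename, liftS_liftR]

theorem Tm.subst_var : ∀ t : Tm, t.subst Tm.var = t
  | .var n => rfl
  | .cup s t => by simp [Tm.subst, Tm.subst_var]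

theorem liftS_var : liftS Tm.var = Tm.var := by
  funext n; cases n <;> rfl

theorem Fm.subst_var : ∀ A : Fm, A.subst Tm.var = A
  | .atom p l => by
      simp only [Fm.subst]
      congr 1
      rw [List.map_congr_left (fun t _ => Tm.subst_var t)]
      exact List.map_id _
  | .top => rfl
  | .bot => rfl
  | .neg A => by simp [Fm.subst, Fm.subst_var]
  | .and A B => by simp [Fm.subst, Fm.subst_var]
  | .or A B => by simp [Fm.subst, Fm.subst_var]
  | .imp A B => by simp [Fm.subst, Fm.subst_var]
  | .all A => by simp [Fm.subst, liftS_var, Fm.subst_var]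
  | .ex A => by simp [Fm.subst, liftS_var, Fm.subst_var]

/-- Instantiating the lifted formula with `var 0` is the identity. -/
theorem Fm.inst0_shift (A : Fm) : (A.rename (liftR Nat.succ)).inst (.var 0) = A := by
  rw [Fm.inst, Fm.subst_rename]
  have : (fun n => (fun m => match m with | 0 => Tm.var 0 | m + 1 => Tm.var m) (liftR Nat.succ n)) = Tm.var := by
    funext n; cases n <;> rfl
  rw [this, Fm.subst_var]

/-! ### Injectivity of renaming -/

theorem liftR_inj {f : Nat → Nat} (hf : Function.Injective f) :
    Function.Injective (liftR f) := by
  intro m n h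
  cases m <;> cases n <;> simp [liftR] at h <;> try rfl
  · exact congrArg Nat.succ (hf h)

theorem Tm.rename_inj {f : Nat → Nat} (hf : Function.Injective f) :
    ∀ {s t : Tm}, s.rename f = t.rename f → s = t := by
  intro s
  induction s with
  | var n => intro t h; cases t <;> simp [Tm.rename] at h; rw [hf h]
  | cup a b iha ihb =>
    intro t h; cases t <;> simp [Tm.rename] at h
    rw [iha h.1, ihb h.2]

theorem Fm.rename_inj : ∀ (A : Fm) {B : Fm} {f : Nat → Nat},
    Function.Injective f → A.rename f = B.rename f → A = B := by
  intro A
  induction A with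
  | atom p l =>
    intro B f hf h; cases B <;> simp [Fm.rename] at h
    obtain ⟨h1, h2⟩ := h
    subst h1
    congr 1
    exact List.map_injective_iff.2 (fun _ _ => Tm.rename_inj hf) h2
  | top => intro B f hf h; cases B <;> simp [Fm.rename] at h; rfl
  | bot => intro B f hf h; cases B <;> simp [Fm.rename] at h; rfl
  | neg A ih =>
    intro B f hf h; cases B <;> simp [Fm.rename] at h
    rw [ih hf h]
  | and A₁ A₂ ih₁ ih₂ =>
    intro B f hf h; cases B <;> simp [Fm.rename] at h
    rw [ih₁ hf h.1, ih₂ hf h.2]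
  | or A₁ A₂ ih₁ ih₂ =>
    intro B f hf h; cases B <;> simp [Fm.rename] at h
    rw [ih₁ hf h.1, ih₂ hf h.2]
  | imp A₁ A₂ ih₁ ih₂ =>
    intro B f hf h; cases B <;> simp [Fm.rename] at h
    rw [ih₁ hf h.1, ih₂ hf h.2]
  | all A ih =>
    intro B f hf h; cases B <;> simp [Fm.rename] at h
    rw [ih (liftR_inj hf) h]
  | ex A ih =>
    intro B f hf h; cases B <;> simp [Fm.rename] at h
    rw [ih (liftR_inj hf) h]

theorem Fm.shift_inj : Function.Injective Fm.shift := by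
  intro A B h
  exact Fm.rename_inj A (fun _ _ h => Nat.succ_injective h) h

theorem Fm.shift_neg (A : Fm) : Fm.shift (.neg A) = .neg A.shift := rfl
/-! ### Deletion from lists, structural lemmas for `Cl` -/

def del (A : Fm) (l : List Fm) : List Fm := l.filter (fun B => B ≠ A)

theorem del_nil (A : Fm) : del A [] = [] := rfl

theorem del_cons_eq {A B : Fm} (h : B = A) (l : List Fm) : del A (B :: l) = del A l := by
  simp [del, List.filter_cons, h]

theorem del_cons_ne {A B : Fm} (h : B ≠ A) (l : List Fm) : del A (B :: l) = B :: del A l := by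
  simp [del, List.filter_cons, h]

theorem del_perm {l l' : List Fm} (A : Fm) (h : l.Perm l') : (del A l).Perm (del A l') :=
  h.filter _

theorem del_sublist (A : Fm) (l : List Fm) : (del A l).Sublist l := List.filter_sublist

theorem del_map {f : Fm → Fm} (hf : Function.Injective f) (A : Fm) (l : List Fm) :
    del (f A) (l.map f) = (del A l).map f := by
  induction l with
  | nil => rfl
  | cons B l ih =>
    by_cases h : B = A
    · subst h; rw [List.map_cons, del_cons_eq rfl, del_cons_eq rfl, ih]
    · rw [List.map_cons, del_cons_ne (fun hc => h (hf hc)), del_cons_ne h, List.map_cons, ih]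

namespace Cl

theorem pl {Γ Γ' Δ : List Fm} (h : Γ.Perm Γ') (d : Cl Γ Δ) : Cl Γ' Δ :=
  Cl.perm h (List.Perm.refl _) d

theorem pr {Γ Δ Δ' : List Fm} (h : Δ.Perm Δ') (d : Cl Γ Δ) : Cl Γ Δ' :=
  Cl.perm (List.Perm.refl _) h d

theorem exchL {A B : Fm} {Γ Δ : List Fm} (d : Cl (A :: B :: Γ) Δ) : Cl (B :: A :: Γ) Δ :=
  d.pl (List.Perm.swap B A Γ)

theorem exchR {A B : Fm} {Γ Δ : List Fm} (d : Cl Γ (A :: B :: Δ)) : Cl Γ (B :: A :: Δ) :=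
  d.pr (List.Perm.swap B A Δ)

/-- move head-left behind a list Ξ -/
theorem toMidL (Ξ : List Fm) {A : Fm} {Γ Δ : List Fm} (d : Cl (A :: (Ξ ++ Γ)) Δ) :
    Cl (Ξ ++ A :: Γ) Δ := d.pl List.perm_middle.symm

theorem fromMidL (Ξ : List Fm) {A : Fm} {Γ Δ : List Fm} (d : Cl (Ξ ++ A :: Γ) Δ) :
    Cl (A :: (Ξ ++ Γ)) Δ := d.pl List.perm_middle

theorem toMidR (Ξ : List Fm) {A : Fm} {Γ Δ : List Fm} (d : Cl Γ (A :: (Ξ ++ Δ))) :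
    Cl Γ (Ξ ++ A :: Δ) := d.pr List.perm_middle.symm

theorem fromMidR (Ξ : List Fm) {A : Fm} {Γ Δ : List Fm} (d : Cl Γ (Ξ ++ A :: Δ)) :
    Cl Γ (A :: (Ξ ++ Δ))  := d.pr List.perm_middle

theorem weakL_sub_aux {Δ : List Fm} : ∀ {l l' : List Fm}, l.Sublist l' →
    ∀ Ξ, Cl (Ξ ++ l) Δ → Cl (Ξ ++ l') Δ := by
  intro l l' h
  induction h with
  | slnil => intro Ξ d; exact d
  | cons a h ih =>
    intro Ξ d
    exact toMidL Ξ (Cl.weakL (ih Ξ d))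
  | @cons_cons l₁ l₂ a h ih =>
    intro Ξ d
    have d' : Cl ((Ξ ++ [a]) ++ l₁) Δ := by simpa using d
    have := ih (Ξ ++ [a]) d'
    simpa using this

theorem weakL_sub {Γ Γ' Δ : List Fm} (h : Γ.Sublist Γ') (d : Cl Γ Δ) : Cl Γ' Δ :=
  weakL_sub_aux h [] d

theorem weakR_sub_aux {Γ : List Fm} : ∀ {l l' : List Fm}, l.Sublist l' →
    ∀ Ξ, Cl Γ (Ξ ++ l) → Cl Γ (Ξ ++ l') := by
  intro l l' h
  induction h with
  | slnil => intro Ξ d; exact d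
  | cons a h ih =>
    intro Ξ d
    exact toMidR Ξ (Cl.weakR (ih Ξ d))
  | @cons_cons l₁ l₂ a h ih =>
    intro Ξ d
    have d' : Cl Γ ((Ξ ++ [a]) ++ l₁) := by simpa using d
    have := ih (Ξ ++ [a]) d'
    simpa using this

theorem weakR_sub {Γ Δ Δ' : List Fm} (h : Δ.Sublist Δ') (d : Cl Γ Δ) : Cl Γ Δ' :=
  weakR_sub_aux h [] d

theorem axm {A : Fm} {Γ Δ : List Fm} (hΓ : A ∈ Γ) (hΔ : A ∈ Δ) : Cl Γ Δ := by
  have d : Cl [A] [A] := Cl.ax A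
  have pΓ : Γ.Perm (A :: Γ.erase A) := List.perm_cons_erase hΓ
  have pΔ : Δ.Perm (A :: Δ.erase A) := List.perm_cons_erase hΔ
  have d₂ : Cl (A :: Γ.erase A) (A :: Δ.erase A) :=
    weakR_sub ((List.nil_sublist _).cons₂ A) (weakL_sub ((List.nil_sublist _).cons₂ A) d)
  exact (d₂.pl pΓ.symm).pr pΔ.symm

theorem nnL {X : Fm} {Γ Δ : List Fm} (d : Cl (X :: Γ) Δ) : Cl (.neg (.neg X) :: Γ) Δ :=
  Cl.negL (Cl.negR d)

theorem nnR {X : Fm} {Γ Δ : List Fm} (d : Cl Γ (X :: Δ)) : Cl Γ (.neg (.neg X) :: Δ) :=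
  Cl.negR (Cl.negL d)

/-- restore a possibly-deleted formula at the head on the right -/
theorem restoreR {X B : Fm} {Γ Δ : List Fm} (d : Cl Γ (del X (B :: Δ))) :
    Cl Γ (B :: del X Δ) := by
  by_cases h : B = X
  · rw [del_cons_eq h] at d; exact Cl.weakR d
  · rwa [del_cons_ne h] at d

/-- restore a possibly-deleted formula in second position on the right -/
theorem restoreR₂ {X B C : Fm} {Γ Δ : List Fm} (d : Cl Γ (C :: del X (B :: Δ))) :
    Cl Γ (C :: B :: del X Δ) := by
  by_cases h : B = X
  · rw [del_cons_eq h] at d; exact exchR (Cl.weakR d)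
  · rwa [del_cons_ne h] at d

theorem restoreL {X B : Fm} {Γ Δ : List Fm} (d : Cl (del X (B :: Γ)) Δ) :
    Cl (B :: del X Γ) Δ := by
  by_cases h : B = X
  · rw [del_cons_eq h] at d; exact Cl.weakL d
  · rwa [del_cons_ne h] at d

end Cl
/-! ### Size of formulas -/

def Fm.size : Fm → Nat
  | .atom _ _ => 1
  | .top => 1
  | .bot => 1
  | .neg A => A.size + 1
  | .and A B => A.size + B.size + 1
  | .or A B => A.size + B.size + 1
  | .imp A B => A.size + B.size + 1
  | .all A => A.size + 1
  | .ex A => A.size + 1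

theorem Fm.size_pos (A : Fm) : 0 < A.size := by cases A <;> simp [Fm.size]

theorem Fm.ne_imp_self (A B : Fm) : B ≠ .imp A B := by
  intro h
  have := congrArg Fm.size h
  simp [Fm.size] at this
  omega

namespace Cl

theorem restoreL₂ {X B C : Fm} {Γ Δ : List Fm} (d : Cl (C :: del X (B :: Γ)) Δ) :
    Cl (C :: B :: del X Γ) Δ := by
  by_cases h : B = X
  · rw [del_cons_eq h] at d; exact exchL (Cl.weakL d)
  · rwa [del_cons_ne h] at d

/-! rotate the first element behind the next two -/
theorem rot3L {A B C : Fm} {Γ Δ : List Fm} (d : Cl (A :: B :: C :: Γ) Δ) :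
    Cl (B :: C :: A :: Γ) Δ := (d.exchL).pl ((List.Perm.swap C A Γ).cons B)

theorem rot3R {A B C : Fm} {Γ Δ : List Fm} (d : Cl Γ (A :: B :: C :: Δ)) :
    Cl Γ (B :: C :: A :: Δ) := (d.exchR).pr ((List.Perm.swap C A Δ).cons B)

/-! ### Inversion of the right negation rule -/

theorem invNegR : ∀ {Γ Δ : List Fm}, Cl Γ Δ → ∀ A : Fm, Cl (A :: Γ) (del (.neg A) Δ) := by
  intro Γ Δ d
  induction d with
  | ax B =>
    intro A
    by_cases h : B = .neg A
    · subst h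
      rw [del_cons_eq rfl, del_nil]
      exact Cl.exchL (Cl.negL (Cl.ax A))
    · rw [del_cons_ne h, del_nil]
      exact Cl.axm (A := B) (by simp) (by simp)
  | perm hΓ hΔ d ih =>
    intro A
    exact ((ih A).pl (hΓ.cons A)).pr (del_perm _ hΔ)
  | contrL d ih =>
    intro A
    exact Cl.exchL (Cl.contrL (Cl.rot3L (ih A)))
  | @contrR Γ Δ B d ih =>
    intro A
    by_cases h : B = .neg A
    · rw [del_cons_eq h]
      have h' := ih A
      rw [del_cons_eq h, del_cons_eq h] at h'
      exact h'
    · rw [del_cons_ne h]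
      have h' := ih A
      rw [del_cons_ne h, del_cons_ne h] at h'
      exact Cl.contrR h'
  | weakL d ih =>
    intro A; exact Cl.exchL (Cl.weakL (ih A))
  | @weakR Γ Δ B d ih =>
    intro A
    by_cases h : B = .neg A
    · rw [del_cons_eq h]; exact ih A
    · rw [del_cons_ne h]; exact Cl.weakR (ih A)
  | topR =>
    intro A
    rw [del_cons_ne (by simp)]
    exact Cl.topR
  | botL =>
    intro A; exact Cl.exchL Cl.botL
  | @negL Γ Δ B d ih =>
    intro A
    have h' : Cl (A :: Γ) (B :: del (.neg A) Δ) := Cl.restoreR (ih A)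
    exact Cl.exchL (Cl.negL h')
  | @negR Γ Δ B d ih =>
    intro A
    by_cases h : B = A
    · subst h
      rw [del_cons_eq rfl]
      exact Cl.contrL (ih B)
    · rw [del_cons_ne (by simp [h])]
      exact Cl.negR (Cl.exchL (ih A))
  | andL d ih =>
    intro A
    exact Cl.exchL (Cl.andL (Cl.rot3L (ih A)))
  | @andR Γ Δ B C d₁ d₂ ih₁ ih₂ =>
    intro A
    rw [del_cons_ne (by simp)]
    have h₁ : Cl (A :: Γ) (B :: del (.neg A) Δ) := Cl.restoreR (ih₁ A)
    have h₂ : Cl (A :: Γ) (C :: del (.neg A) Δ) := Cl.restoreR (ih₂ A)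
    exact Cl.andR h₁ h₂
  | orL d₁ d₂ ih₁ ih₂ =>
    intro A
    exact Cl.exchL (Cl.orL (Cl.exchL (ih₁ A)) (Cl.exchL (ih₂ A)))
  | @orR1 Γ Δ B C d ih =>
    intro A
    rw [del_cons_ne (by simp)]
    exact Cl.orR1 (Cl.restoreR (ih A))
  | @orR2 Γ Δ B C d ih =>
    intro A
    rw [del_cons_ne (by simp)]
    exact Cl.orR2 (Cl.restoreR (ih A))
  | @impL Γ Δ B C d₁ d₂ ih₁ ih₂ =>
    intro A
    have h₁ : Cl (A :: Γ) (B :: del (.neg A) Δ) := Cl.restoreR (ih₁ A)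
    exact Cl.exchL (Cl.impL h₁ (Cl.exchL (ih₂ A)))
  | impR d ih =>
    intro A
    rw [del_cons_ne (by simp)]
    exact Cl.impR (Cl.exchL (Cl.restoreR (ih A)))
  | allL t d ih =>
    intro A
    exact Cl.exchL (Cl.allL t (Cl.exchL (ih A)))
  | allR d ih =>
    intro A
    rw [del_cons_ne (by simp)]
    apply Cl.allR
    have h := Cl.restoreR (ih (Fm.shift A))
    rw [show (Fm.neg (Fm.shift A)) = Fm.shift (.neg A) from rfl, del_map Fm.shift_inj] at h
    simpa using h
  | exL d ih =>
    intro A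
    have h := Cl.exchL (ih (Fm.shift A))
    rw [show (Fm.neg (Fm.shift A)) = Fm.shift (.neg A) from rfl, del_map Fm.shift_inj] at h
    exact Cl.exchL (Cl.exL (by simpa using h))
  | exR t d ih =>
    intro A
    rw [del_cons_ne (by simp)]
    exact Cl.exR t (Cl.restoreR (ih A))

/-! ### Inversion of the left negation rule -/

theorem invNegL : ∀ {Γ Δ : List Fm}, Cl Γ Δ → ∀ A : Fm, Cl (del (.neg A) Γ) (A :: Δ) := by
  intro Γ Δ d
  induction d with
  | ax B =>
    intro A
    by_cases h : B = .neg A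
    · subst h
      rw [del_cons_eq rfl, del_nil]
      exact Cl.exchR (Cl.negR (Cl.ax A))
    · rw [del_cons_ne h, del_nil]
      exact Cl.axm (A := B) (by simp) (by simp)
  | perm hΓ hΔ d ih =>
    intro A
    exact ((ih A).pl (del_perm _ hΓ)).pr (hΔ.cons A)
  | @contrL Γ Δ B d ih =>
    intro A
    by_cases h : B = .neg A
    · rw [del_cons_eq h]
      have h' := ih A
      rw [del_cons_eq h, del_cons_eq h] at h'
      exact h'
    · rw [del_cons_ne h]
      have h' := ih A
      rw [del_cons_ne h, del_cons_ne h] at h'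
      exact Cl.contrL h'
  | contrR d ih =>
    intro A
    exact Cl.exchR (Cl.contrR (Cl.rot3R (ih A)))
  | @weakL Γ Δ B d ih =>
    intro A
    by_cases h : B = .neg A
    · rw [del_cons_eq h]; exact ih A
    · rw [del_cons_ne h]; exact Cl.weakL (ih A)
  | weakR d ih =>
    intro A; exact Cl.exchR (Cl.weakR (ih A))
  | topR =>
    intro A; exact Cl.exchR Cl.topR
  | botL =>
    intro A
    rw [del_cons_ne (by simp)]
    exact Cl.botL
  | @negL Γ Δ B d ih =>
    intro A
    by_cases h : B = A
    · subst h
      rw [del_cons_eq rfl]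
      exact Cl.contrR (ih B)
    · rw [del_cons_ne (by simp [h])]
      exact Cl.negL (Cl.exchR (ih A))
  | @negR Γ Δ B d ih =>
    intro A
    have h' : Cl (B :: del (.neg A) Γ) (A :: Δ) := Cl.restoreL (ih A)
    exact Cl.exchR (Cl.negR h')
  | andL d ih =>
    intro A
    rw [del_cons_ne (by simp)]
    exact Cl.andL (Cl.restoreL₂ (Cl.restoreL (ih A)))
  | andR d₁ d₂ ih₁ ih₂ =>
    intro A
    exact Cl.exchR (Cl.andR (Cl.exchR (ih₁ A)) (Cl.exchR (ih₂ A)))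
  | orL d₁ d₂ ih₁ ih₂ =>
    intro A
    rw [del_cons_ne (by simp)]
    exact Cl.orL (Cl.restoreL (ih₁ A)) (Cl.restoreL (ih₂ A))
  | orR1 d ih =>
    intro A
    exact Cl.exchR (Cl.orR1 (Cl.exchR (ih A)))
  | orR2 d ih =>
    intro A
    exact Cl.exchR (Cl.orR2 (Cl.exchR (ih A)))
  | impL d₁ d₂ ih₁ ih₂ =>
    intro A
    rw [del_cons_ne (by simp)]
    exact Cl.impL (Cl.exchR (ih₁ A)) (Cl.restoreL (ih₂ A))
  | impR d ih =>
    intro A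
    exact Cl.exchR (Cl.impR (Cl.exchR (Cl.restoreL (ih A))))
  | allL t d ih =>
    intro A
    rw [del_cons_ne (by simp)]
    exact Cl.allL t (Cl.restoreL (ih A))
  | allR d ih =>
    intro A
    have h := Cl.exchR (ih (Fm.shift A))
    rw [show (Fm.neg (Fm.shift A)) = Fm.shift (.neg A) from rfl, del_map Fm.shift_inj] at h
    exact Cl.exchR (Cl.allR (by simpa using h))
  | exL d ih =>
    intro A
    rw [del_cons_ne (by simp)]
    apply Cl.exL
    have h := Cl.restoreL (ih (Fm.shift A))
    rw [show (Fm.neg (Fm.shift A)) = Fm.shift (.neg A) from rfl, del_map Fm.shift_inj] at h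
    simpa using h
  | exR t d ih =>
    intro A
    exact Cl.exchR (Cl.exR t (Cl.exchR (ih A)))

/-! ### Inversion of the right implication rule -/

theorem invImpR : ∀ {Γ Δ : List Fm}, Cl Γ Δ →
    ∀ A B : Fm, Cl (A :: Γ) (B :: del (.imp A B) Δ) := by
  intro Γ Δ d
  induction d with
  | ax C =>
    intro A B
    by_cases h : C = .imp A B
    · subst h
      rw [del_cons_eq rfl, del_nil]
      have d1 : Cl [A] (A :: [B]) := Cl.exchR (Cl.weakR (Cl.ax A))
      have d2 : Cl (B :: [A]) [B] := Cl.exchL (Cl.weakL (Cl.ax B))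
      exact Cl.exchL (Cl.impL d1 d2)
    · rw [del_cons_ne h, del_nil]
      exact Cl.axm (A := C) (by simp) (by simp)
  | perm hΓ hΔ d ih =>
    intro A B
    exact ((ih A B).pl (hΓ.cons A)).pr ((del_perm _ hΔ).cons B)
  | contrL d ih =>
    intro A B
    exact Cl.exchL (Cl.contrL (Cl.rot3L (ih A B)))
  | @contrR Γ Δ C d ih =>
    intro A B
    by_cases h : C = .imp A B
    · rw [del_cons_eq h]
      have h' := ih A B
      rw [del_cons_eq h, del_cons_eq h] at h'
      exact h'
    · rw [del_cons_ne h]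
      have h' := ih A B
      rw [del_cons_ne h, del_cons_ne h] at h'
      exact Cl.exchR (Cl.contrR (Cl.rot3R h'))
  | weakL d ih =>
    intro A B; exact Cl.exchL (Cl.weakL (ih A B))
  | @weakR Γ Δ C d ih =>
    intro A B
    by_cases h : C = .imp A B
    · rw [del_cons_eq h]; exact ih A B
    · rw [del_cons_ne h]; exact Cl.exchR (Cl.weakR (ih A B))
  | topR =>
    intro A B
    rw [del_cons_ne (by simp)]
    exact Cl.exchR Cl.topR
  | botL =>
    intro A B; exact Cl.exchL Cl.botL
  | @negL Γ Δ C d ih =>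
    intro A B
    have h₁ : Cl (A :: Γ) (B :: C :: del (.imp A B) Δ) := Cl.restoreR₂ (ih A B)
    exact Cl.exchL (Cl.negL (Cl.exchR h₁))
  | @negR Γ Δ C d ih =>
    intro A B
    rw [del_cons_ne (by simp)]
    exact Cl.exchR (Cl.negR (Cl.exchL (ih A B)))
  | andL d ih =>
    intro A B
    exact Cl.exchL (Cl.andL (Cl.rot3L (ih A B)))
  | @andR Γ Δ C D d₁ d₂ ih₁ ih₂ =>
    intro A B
    rw [del_cons_ne (by simp)]
    have h₁ : Cl (A :: Γ) (C :: B :: del (.imp A B) Δ) := Cl.exchR (Cl.restoreR₂ (ih₁ A B))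
    have h₂ : Cl (A :: Γ) (D :: B :: del (.imp A B) Δ) := Cl.exchR (Cl.restoreR₂ (ih₂ A B))
    exact Cl.exchR (Cl.andR h₁ h₂)
  | orL d₁ d₂ ih₁ ih₂ =>
    intro A B
    exact Cl.exchL (Cl.orL (Cl.exchL (ih₁ A B)) (Cl.exchL (ih₂ A B)))
  | @orR1 Γ Δ C D d ih =>
    intro A B
    rw [del_cons_ne (by simp)]
    have h₁ : Cl (A :: Γ) (C :: B :: del (.imp A B) Δ) := Cl.exchR (Cl.restoreR₂ (ih A B))
    exact Cl.exchR (Cl.orR1 h₁)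
  | @orR2 Γ Δ C D d ih =>
    intro A B
    rw [del_cons_ne (by simp)]
    have h₁ : Cl (A :: Γ) (D :: B :: del (.imp A B) Δ) := Cl.exchR (Cl.restoreR₂ (ih A B))
    exact Cl.exchR (Cl.orR2 h₁)
  | @impL Γ Δ C D d₁ d₂ ih₁ ih₂ =>
    intro A B
    have h₁ : Cl (A :: Γ) (C :: B :: del (.imp A B) Δ) := Cl.exchR (Cl.restoreR₂ (ih₁ A B))
    have h₂ : Cl (D :: A :: Γ) (B :: del (.imp A B) Δ) := Cl.exchL (ih₂ A B)
    exact Cl.exchL (Cl.impL h₁ h₂)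
  | @impR Γ Δ C D d ih =>
    intro A B
    by_cases h : Fm.imp C D = .imp A B
    · rw [del_cons_eq h]
      have hCA : C = A := by injection h
      have hDB : D = B := by injection h
      subst hCA; subst hDB
      have h' := ih C D
      rw [del_cons_ne (Fm.ne_imp_self C D)] at h'
      exact Cl.contrL (Cl.contrR h')
    · rw [del_cons_ne h]
      have h' : Cl (C :: A :: Γ) (D :: B :: del (.imp A B) Δ) :=
        Cl.exchL (Cl.exchR (Cl.restoreR₂ (ih A B)))
      exact Cl.exchR (Cl.impR h')
  | allL t d ih =>
    intro A B
    exact Cl.exchL (Cl.allL t (Cl.exchL (ih A B)))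
  | @allR Γ Δ C d ih =>
    intro A B
    rw [del_cons_ne (by simp)]
    apply Cl.exchR
    apply Cl.allR
    have h : Cl (Fm.shift A :: Γ.map Fm.shift)
        (C :: Fm.shift B :: del (Fm.shift (.imp A B)) (Δ.map Fm.shift)) :=
      Cl.exchR (Cl.restoreR₂ (ih (Fm.shift A) (Fm.shift B)))
    rw [del_map Fm.shift_inj] at h
    simpa using h
  | exL d ih =>
    intro A B
    have h := Cl.exchL (ih (Fm.shift A) (Fm.shift B))
    rw [show (Fm.imp (Fm.shift A) (Fm.shift B)) = Fm.shift (.imp A B) from rfl,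
      del_map Fm.shift_inj] at h
    exact Cl.exchL (Cl.exL (by simpa using h))
  | @exR Γ Δ C t d ih =>
    intro A B
    rw [del_cons_ne (by simp)]
    have h₁ : Cl (A :: Γ) (C.inst t :: B :: del (.imp A B) Δ) :=
      Cl.exchR (Cl.restoreR₂ (ih A B))
    exact Cl.exchR (Cl.exR t h₁)

end Cl
/-! ### Purely atomic sequents -/

theorem cl_atoms : ∀ {Γ Δ : List Fm}, Cl Γ Δ → (∀ B ∈ Γ, B.isAtom) → (∀ B ∈ Δ, B.isAtom) →
    ∃ B, B ∈ Γ ∧ B ∈ Δ := by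
  intro Γ Δ d
  induction d with
  | ax A => intro _ _; exact ⟨A, by simp, by simp⟩
  | perm hΓ hΔ d ih =>
    intro h1 h2
    obtain ⟨B, hB1, hB2⟩ := ih (fun B hB => h1 B (hΓ.subset hB)) (fun B hB => h2 B (hΔ.subset hB))
    exact ⟨B, hΓ.subset hB1, hΔ.subset hB2⟩
  | contrL d ih =>
    intro h1 h2
    obtain ⟨B, hB1, hB2⟩ := ih (by intro B hB; apply h1; simp at hB ⊢; tauto) h2
    refine ⟨B, ?_, hB2⟩
    simp at hB1 ⊢; tauto
  | contrR d ih =>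
    intro h1 h2
    obtain ⟨B, hB1, hB2⟩ := ih h1 (by intro B hB; apply h2; simp at hB ⊢; tauto)
    refine ⟨B, hB1, ?_⟩
    simp at hB2 ⊢; tauto
  | weakL d ih =>
    intro h1 h2
    obtain ⟨B, hB1, hB2⟩ := ih (fun B hB => h1 B (List.mem_cons_of_mem _ hB)) h2
    exact ⟨B, List.mem_cons_of_mem _ hB1, hB2⟩
  | weakR d ih =>
    intro h1 h2
    obtain ⟨B, hB1, hB2⟩ := ih h1 (fun B hB => h2 B (List.mem_cons_of_mem _ hB))
    exact ⟨B, hB1, List.mem_cons_of_mem _ hB2⟩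
  | topR => intro _ h2; exact absurd (h2 _ (List.mem_cons_self)) (by simp [Fm.isAtom])
  | botL => intro h1 _; exact absurd (h1 _ (List.mem_cons_self)) (by simp [Fm.isAtom])
  | negL _ _ => intro h1 _; exact absurd (h1 _ (List.mem_cons_self)) (by simp [Fm.isAtom])
  | negR _ _ => intro _ h2; exact absurd (h2 _ (List.mem_cons_self)) (by simp [Fm.isAtom])
  | andL _ _ => intro h1 _; exact absurd (h1 _ (List.mem_cons_self)) (by simp [Fm.isAtom])
  | andR _ _ _ _ => intro _ h2; exact absurd (h2 _ (List.mem_cons_self)) (by simp [Fm.isAtom])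
  | orL _ _ _ _ => intro h1 _; exact absurd (h1 _ (List.mem_cons_self)) (by simp [Fm.isAtom])
  | orR1 _ _ => intro _ h2; exact absurd (h2 _ (List.mem_cons_self)) (by simp [Fm.isAtom])
  | orR2 _ _ => intro _ h2; exact absurd (h2 _ (List.mem_cons_self)) (by simp [Fm.isAtom])
  | impL _ _ _ _ => intro h1 _; exact absurd (h1 _ (List.mem_cons_self)) (by simp [Fm.isAtom])
  | impR _ _ => intro _ h2; exact absurd (h2 _ (List.mem_cons_self)) (by simp [Fm.isAtom])
  | allL _ _ _ => intro h1 _; exact absurd (h1 _ (List.mem_cons_self)) (by simp [Fm.isAtom])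
  | allR _ _ => intro _ h2; exact absurd (h2 _ (List.mem_cons_self)) (by simp [Fm.isAtom])
  | exL _ _ => intro h1 _; exact absurd (h1 _ (List.mem_cons_self)) (by simp [Fm.isAtom])
  | exR _ _ _ => intro _ h2; exact absurd (h2 _ (List.mem_cons_self)) (by simp [Fm.isAtom])

theorem no_cl_atom (p : Nat) (l : List Tm) : ¬ Cl [] [.atom p l] := by
  intro d
  obtain ⟨B, hB1, _⟩ := cl_atoms d (by simp) (by intro B hB; simp at hB; subst hB; trivial)
  simp at hB1

/-! ### The decoration relation -/

/-- `R A B` : `A` is `B` with extra double negations inserted. -/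
inductive R : Fm → Fm → Prop where
  | atom (p : Nat) (l : List Tm) : R (.atom p l) (.atom p l)
  | top : R .top .top
  | bot : R .bot .bot
  | neg {A B} : R A B → R (.neg A) (.neg B)
  | and {A₁ A₂ B₁ B₂} : R A₁ B₁ → R A₂ B₂ → R (.and A₁ A₂) (.and B₁ B₂)
  | or {A₁ A₂ B₁ B₂} : R A₁ B₁ → R A₂ B₂ → R (.or A₁ A₂) (.or B₁ B₂)
  | imp {A₁ A₂ B₁ B₂} : R A₁ B₁ → R A₂ B₂ → R (.imp A₁ A₂) (.imp B₁ B₂)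
  | all {A B} : R A B → R (.all A) (.all B)
  | ex {A B} : R A B → R (.ex A) (.ex B)
  | dn {A B} : R A B → R (.neg (.neg A)) B

theorem R_rename : ∀ {A B : Fm}, R A B → ∀ f, R (A.rename f) (B.rename f) := by
  intro A B h
  induction h with
  | atom p l => intro f; exact R.atom _ _
  | top => intro f; exact R.top
  | bot => intro f; exact R.bot
  | neg h ih => intro f; exact R.neg (ih f)
  | and h₁ h₂ ih₁ ih₂ => intro f; exact R.and (ih₁ f) (ih₂ f)
  | or h₁ h₂ ih₁ ih₂ => intro f; exact R.or (ih₁ f) (ih₂ f)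
  | imp h₁ h₂ ih₁ ih₂ => intro f; exact R.imp (ih₁ f) (ih₂ f)
  | all h ih => intro f; exact R.all (ih _)
  | ex h ih => intro f; exact R.ex (ih _)
  | dn h ih => intro f; exact R.dn (ih f)

theorem R_subst : ∀ {A B : Fm}, R A B → ∀ σ, R (A.subst σ) (B.subst σ) := by
  intro A B h
  induction h with
  | atom p l => intro σ; exact R.atom _ _
  | top => intro σ; exact R.top
  | bot => intro σ; exact R.bot
  | neg h ih => intro σ; exact R.neg (ih σ)
  | and h₁ h₂ ih₁ ih₂ => intro σ; exact R.and (ih₁ σ) (ih₂ σ)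
  | or h₁ h₂ ih₁ ih₂ => intro σ; exact R.or (ih₁ σ) (ih₂ σ)
  | imp h₁ h₂ ih₁ ih₂ => intro σ; exact R.imp (ih₁ σ) (ih₂ σ)
  | all h ih => intro σ; exact R.all (ih _)
  | ex h ih => intro σ; exact R.ex (ih _)
  | dn h ih => intro σ; exact R.dn (ih σ)

theorem R_shift {A B : Fm} (h : R A B) : R A.shift B.shift := R_rename h _

theorem R_inst {A B : Fm} (h : R A B) (t : Tm) : R (A.inst t) (B.inst t) := R_subst h _

/-! ### Collapsing double negations -/

def dneg : Fm → Fm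
  | .neg B => B
  | A => .neg A

def canon : Fm → Fm
  | .atom p l => .atom p l
  | .top => .top
  | .bot => .bot
  | .neg A => dneg (canon A)
  | .and A B => .and (canon A) (canon B)
  | .or A B => .or (canon A) (canon B)
  | .imp A B => .imp (canon A) (canon B)
  | .all A => .all (canon A)
  | .ex A => .ex (canon A)

theorem dneg_neg (B : Fm) : dneg (.neg B) = B := rfl

theorem dneg_of_not_neg {A : Fm} (h : ∀ B, A ≠ .neg B) : dneg A = .neg A := by
  cases A <;> first | rfl | exact absurd rfl (h _)

/-- `A` has no double negation at the root. -/
def Safe (A : Fm) : Prop := ∀ B, A ≠ .neg (.neg B)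

theorem safe_of_not_neg {A : Fm} (h : ∀ B, A ≠ .neg B) : Safe A := by
  intro B hB; exact h _ hB

theorem dneg_dneg {A : Fm} (h : Safe A) : dneg (dneg A) = A := by
  cases A with
  | neg B =>
    rw [dneg_neg]
    have hB : ∀ C, B ≠ .neg C := by
      intro C hC; exact h C (by rw [hC])
    rw [dneg_of_not_neg hB]
  | _ => rfl

theorem safe_dneg {A : Fm} (h : Safe A) : Safe (dneg A) := by
  cases A with
  | neg B =>
    rw [dneg_neg]
    have hB : ∀ C, B ≠ .neg C := by
      intro C hC; exact h C (by rw [hC])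
    exact safe_of_not_neg hB
  | atom p l => intro B hB; simp [dneg] at hB
  | top => intro B hB; simp [dneg] at hB
  | bot => intro B hB; simp [dneg] at hB
  | and _ _ => intro B hB; simp [dneg] at hB
  | or _ _ => intro B hB; simp [dneg] at hB
  | imp _ _ => intro B hB; simp [dneg] at hB
  | all _ => intro B hB; simp [dneg] at hB
  | ex _ => intro B hB; simp [dneg] at hB

theorem canon_safe : ∀ A : Fm, Safe (canon A) := by
  intro A
  induction A with
  | neg A ih => rw [show canon (.neg A) = dneg (canon A) from rfl]; exact safe_dneg ih
  | atom p l => intro B hB; simp [canon] at hB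
  | top => intro B hB; simp [canon] at hB
  | bot => intro B hB; simp [canon] at hB
  | and _ _ _ _ => intro B hB; simp [canon] at hB
  | or _ _ _ _ => intro B hB; simp [canon] at hB
  | imp _ _ _ _ => intro B hB; simp [canon] at hB
  | all _ _ => intro B hB; simp [canon] at hB
  | ex _ _ => intro B hB; simp [canon] at hB

theorem canon_nn (A : Fm) : canon (.neg (.neg A)) = canon A := by
  show dneg (dneg (canon A)) = canon A
  exact dneg_dneg (canon_safe A)

theorem R_canon : ∀ {A B : Fm}, R A B → canon B = canon A := by
  intro A B h
  induction h with
  | atom p l => rfl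
  | top => rfl
  | bot => rfl
  | neg h ih => show dneg (canon _) = dneg (canon _); rw [ih]
  | and h₁ h₂ ih₁ ih₂ => simp [canon, ih₁, ih₂]
  | or h₁ h₂ ih₁ ih₂ => simp [canon, ih₁, ih₂]
  | imp h₁ h₂ ih₁ ih₂ => simp [canon, ih₁, ih₂]
  | all h ih => simp [canon, ih]
  | ex h ih => simp [canon, ih]
  | dn h ih => rw [canon_nn]; exact ih
/-! ### Head discriminator -/

def hd : Fm → Nat
  | .atom _ _ => 0
  | .top => 1
  | .bot => 2
  | .neg _ => 3
  | .and _ _ => 4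
  | .or _ _ => 5
  | .imp _ _ => 6
  | .all _ => 7
  | .ex _ => 8

theorem canon_neg_of {B₀ : Fm} (h : ∀ X, B₀ ≠ .neg X) : canon (.neg B₀) = .neg (canon B₀) := by
  show dneg (canon B₀) = .neg (canon B₀)
  apply dneg_of_not_neg
  intro X hX
  cases B₀ with
  | neg Y => exact h Y rfl
  | atom p l => simp [canon] at hX
  | top => simp [canon] at hX
  | bot => simp [canon] at hX
  | and _ _ => simp [canon] at hX
  | or _ _ => simp [canon] at hX
  | imp _ _ => simp [canon] at hX
  | all _ => simp [canon] at hX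
  | ex _ => simp [canon] at hX

theorem hd_canon {B : Fm} (h : ∀ B₁, B ≠ .neg (.neg B₁)) : hd (canon B) = hd B := by
  cases B with
  | neg B₀ =>
    have hB₀ : ∀ X, B₀ ≠ .neg X := fun X hX => h X (by rw [hX])
    rw [canon_neg_of hB₀]; rfl
  | atom p l => rfl
  | top => rfl
  | bot => rfl
  | and _ _ => rfl
  | or _ _ => rfl
  | imp _ _ => rfl
  | all _ => rfl
  | ex _ => rfl

/-! ### Formulas with equal collapses are provably equivalent -/

theorem clCanonEq : ∀ (n : Nat) (B C : Fm), B.size + C.size ≤ n → canon B = canon C →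
    Cl [B] [C] := by
  intro n
  induction n with
  | zero =>
    intro B C hsz _
    have := B.size_pos; have := C.size_pos; omega
  | succ n ihn =>
    intro B C hsz hc
    by_cases hBnn : ∃ B₁, B = .neg (.neg B₁)
    · obtain ⟨B₁, rfl⟩ := hBnn
      rw [canon_nn] at hc
      exact Cl.nnL (ihn B₁ C (by simp [Fm.size] at hsz; omega) hc)
    by_cases hCnn : ∃ C₁, C = .neg (.neg C₁)
    · obtain ⟨C₁, rfl⟩ := hCnn
      rw [canon_nn] at hc
      exact Cl.nnR (ihn B C₁ (by simp [Fm.size] at hsz; omega) hc)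
    have hB' : ∀ B₁, B ≠ .neg (.neg B₁) := fun B₁ hB => hBnn ⟨B₁, hB⟩
    have hC' : ∀ C₁, C ≠ .neg (.neg C₁) := fun C₁ hC => hCnn ⟨C₁, hC⟩
    have hhd : hd B = hd C := by rw [← hd_canon hB', ← hd_canon hC', hc]
    cases B with
    | atom p l =>
      cases C <;> try simp [hd] at hhd
      rename_i q m
      simp [canon] at hc
      obtain ⟨rfl, rfl⟩ := hc
      exact Cl.ax _
    | top =>
      cases C <;> try simp [hd] at hhd
      exact Cl.ax _
    | bot =>
      cases C <;> try simp [hd] at hhd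
      exact Cl.ax _
    | neg B₀ =>
      cases C <;> try simp [hd] at hhd
      rename_i C₀
      have hB₀ : ∀ X, B₀ ≠ .neg X := fun X hX => hBnn ⟨X, by rw [hX]⟩
      have hC₀ : ∀ X, C₀ ≠ .neg X := fun X hX => hCnn ⟨X, by rw [hX]⟩
      rw [canon_neg_of hB₀, canon_neg_of hC₀] at hc
      have hc' : canon C₀ = canon B₀ := by
        injection hc with h'; rw [h']
      have d : Cl [C₀] [B₀] := ihn C₀ B₀ (by simp [Fm.size] at hsz; omega) hc'
      exact Cl.negR (Cl.exchL (Cl.negL d))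
    | and B₁ B₂ =>
      cases C <;> try simp [hd] at hhd
      rename_i C₁ C₂
      simp [canon] at hc
      have d₁ : Cl [B₁] [C₁] := ihn _ _ (by simp [Fm.size] at hsz; omega) hc.1
      have d₂ : Cl [B₂] [C₂] := ihn _ _ (by simp [Fm.size] at hsz; omega) hc.2
      apply Cl.andL
      apply Cl.andR
      · exact Cl.exchL (Cl.weakL d₁)
      · exact Cl.weakL d₂
    | or B₁ B₂ =>
      cases C <;> try simp [hd] at hhd
      rename_i C₁ C₂
      simp [canon] at hc
      have d₁ : Cl [B₁] [C₁] := ihn _ _ (by simp [Fm.size] at hsz; omega) hc.1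
      have d₂ : Cl [B₂] [C₂] := ihn _ _ (by simp [Fm.size] at hsz; omega) hc.2
      exact Cl.orL (Cl.orR1 d₁) (Cl.orR2 d₂)
    | imp B₁ B₂ =>
      cases C <;> try simp [hd] at hhd
      rename_i C₁ C₂
      simp [canon] at hc
      have d₁ : Cl [C₁] [B₁] := ihn _ _ (by simp [Fm.size] at hsz; omega) hc.1.symm
      have d₂ : Cl [B₂] [C₂] := ihn _ _ (by simp [Fm.size] at hsz; omega) hc.2
      apply Cl.impR
      apply Cl.exchL
      apply Cl.impL
      · exact Cl.exchR (Cl.weakR d₁)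
      · exact Cl.exchL (Cl.weakL d₂)
    | all B₀ =>
      cases C <;> try simp [hd] at hhd
      rename_i C₀
      simp [canon] at hc
      have d : Cl [B₀] [C₀] := ihn _ _ (by simp [Fm.size] at hsz; omega) hc
      apply Cl.allR
      show Cl [Fm.shift (.all B₀)] [C₀]
      rw [show Fm.shift (.all B₀) = .all (B₀.rename (liftR Nat.succ)) from rfl]
      apply Cl.allL (Tm.var 0)
      rw [Fm.inst0_shift]
      exact d
    | ex B₀ =>
      cases C <;> try simp [hd] at hhd
      rename_i C₀
      simp [canon] at hc
      have d : Cl [B₀] [C₀] := ihn _ _ (by simp [Fm.size] at hsz; omega) hc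
      apply Cl.exL
      show Cl [B₀] [Fm.shift (.ex C₀)]
      rw [show Fm.shift (.ex C₀) = .ex (C₀.rename (liftR Nat.succ)) from rfl]
      apply Cl.exR (Tm.var 0)
      rw [Fm.inst0_shift]
      exact d

/-! ### `R` facts about the translations -/

theorem R_bar : ∀ A : Fm, R A.bar A := by
  intro A
  induction A with
  | atom p l => exact R.atom p l
  | top => exact R.dn R.top
  | bot => exact R.dn R.bot
  | neg A ih => exact R.dn (R.dn (R.neg ih))
  | and A B ihA ihB => exact R.dn (R.and (R.dn ihA) (R.dn ihB))
  | or A B ihA ihB => exact R.dn (R.or (R.dn ihA) (R.dn ihB))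
  | imp A B ihA ihB => exact R.dn (R.imp (R.dn ihA) (R.dn ihB))
  | all A ih => exact R.dn (R.all (R.dn ih))
  | ex A ih => exact R.dn (R.ex (R.dn ih))

theorem R_fold (A : Fm) : ∀ Γ : List Fm,
    R (Γ.foldr (fun H acc => Fm.impc H.bar acc) A.bar) (Γ.foldr Fm.imp A)
  | [] => R_bar A
  | H :: Γ => R.dn (R.imp (R.dn (R_bar H)) (R.dn (R_fold A Γ)))

/-! ### Unfolding an iterated implication -/

theorem cl_unfold_imp (A : Fm) : ∀ (Γ Ctx : List Fm),
    Cl Ctx [Γ.foldr Fm.imp A] → Cl (Γ ++ Ctx) [A]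
  | [], Ctx, d => by simpa using d
  | H :: Γ, Ctx, d => by
    have h := Cl.invImpR d H (Γ.foldr Fm.imp A)
    simp only [List.foldr_cons] at h
    rw [del_cons_eq rfl, del_nil] at h
    exact (cl_unfold_imp A Γ (H :: Ctx) h).pl List.perm_middle
/-! ### From constructive proofs of decorated sequents to classical proofs -/

def olist : Option Fm → List Fm
  | none => []
  | some A => [A]

inductive ORel : Option Fm → Option Fm → Prop where
  | none : ORel none none
  | some {A B : Fm} : R A B → ORel (some A) (some B)

theorem olist_map (f : Fm → Fm) (Δ : Option Fm) : olist (Δ.map f) = (olist Δ).map f := by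
  cases Δ <;> rfl

theorem orel_shift {Δ' Δc : Option Fm} (h : ORel Δ' Δc) :
    ORel (Δ'.map Fm.shift) (Δc.map Fm.shift) := by
  cases h with
  | none => exact .none
  | some h => exact .some (R_shift h)

theorem perm_forall₂ {r : Fm → Fm → Prop} : ∀ {l₁ l₂ : List Fm}, l₁.Perm l₂ →
    ∀ {l : List Fm}, List.Forall₂ r l₂ l → ∃ l', List.Forall₂ r l₁ l' ∧ l'.Perm l := by
  intro l₁ l₂ h
  induction h with
  | nil =>
    intro l hl; cases hl; exact ⟨[], .nil, .nil⟩
  | cons a h ih =>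
    intro l hl
    cases hl with
    | cons hab hrest =>
      obtain ⟨l', h1, h2⟩ := ih hrest
      exact ⟨_ :: l', .cons hab h1, h2.cons _⟩
  | swap a b l' =>
    intro l hl
    cases hl with
    | cons h1 hrest =>
      cases hrest with
      | cons h2 hrest2 =>
        exact ⟨_ :: _ :: _, .cons h2 (.cons h1 hrest2), List.Perm.swap _ _ _⟩
  | trans h1 h2 ih1 ih2 =>
    intro l hl
    obtain ⟨l', ha, hb⟩ := ih2 hl
    obtain ⟨l'', hc, hd⟩ := ih1 ha
    exact ⟨l'', hc, hd.trans hb⟩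

theorem forall₂_shift : ∀ {Γ Γc : List Fm}, List.Forall₂ R Γ Γc →
    List.Forall₂ R (Γ.map Fm.shift) (Γc.map Fm.shift) := by
  intro Γ Γc h
  induction h with
  | nil => exact .nil
  | cons hab h ih => exact .cons (R_shift hab) ih

theorem intu_to_cl : ∀ {Γ' : List Fm} {Δ' : Option Fm}, Intu Γ' Δ' →
    ∀ {Γc : List Fm} {Δc : Option Fm}, List.Forall₂ R Γ' Γc → ORel Δ' Δc →
    Cl Γc (olist Δc) := by
  intro Γ' Δ' d
  induction d with
  | ax A =>
    intro Γc Δc hΓ hΔ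
    cases hΓ with
    | cons hB hnil =>
      cases hnil
      cases hΔ with
      | some hC =>
        exact clCanonEq _ _ _ (le_refl _) ((R_canon hB).trans (R_canon hC).symm)
  | perm hp d ih =>
    intro Γc Δc hΓ hΔ
    obtain ⟨Γc', hF, hPerm⟩ := perm_forall₂ hp hΓ
    exact (ih hF hΔ).pl hPerm
  | contrL d ih =>
    intro Γc Δc hΓ hΔ
    cases hΓ with
    | cons hB hrest => exact Cl.contrL (ih (.cons hB (.cons hB hrest)) hΔ)
  | weakL d ih =>
    intro Γc Δc hΓ hΔ
    cases hΓ with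
    | cons hB hrest => exact Cl.weakL (ih hrest hΔ)
  | weakR d ih =>
    intro Γc Δc hΓ hΔ
    cases hΔ with
    | some hC => exact Cl.weakR (ih hΓ .none)
  | topR =>
    intro Γc Δc hΓ hΔ
    cases hΔ with
    | some hC => cases hC with | top => exact Cl.topR
  | botL =>
    intro Γc Δc hΓ hΔ
    cases hΓ with
    | cons hB hrest => cases hB with | bot => exact Cl.botL
  | negL d ih =>
    intro Γc Δc hΓ hΔ
    cases hΔ
    cases hΓ with
    | @cons _ B _ _ hB hrest =>
      cases hB with
      | neg hB' => exact Cl.negL (ih hrest (.some hB'))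
      | dn hB' =>
        have h := ih hrest (.some (R.neg hB'))
        have h2 := Cl.invNegR h B
        simp only [olist] at h2 ⊢
        rw [del_cons_eq rfl, del_nil] at h2
        exact h2
  | negR d ih =>
    intro Γc Δc hΓ hΔ
    cases hΔ with
    | @some _ C hC =>
      cases hC with
      | neg hC' => exact Cl.negR (ih (.cons hC' hΓ) .none)
      | dn hC' =>
        have h := ih (.cons (R.neg hC') hΓ) .none
        have h2 := Cl.invNegL h C
        rw [del_cons_eq rfl] at h2
        simp only [olist] at h2 ⊢
        exact Cl.weakL_sub (del_sublist _ _) h2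
  | andL d ih =>
    intro Γc Δc hΓ hΔ
    cases hΓ with
    | cons hB hrest =>
      cases hB with
      | and h₁ h₂ => exact Cl.andL (ih (.cons h₁ (.cons h₂ hrest)) hΔ)
  | andR d₁ d₂ ih₁ ih₂ =>
    intro Γc Δc hΓ hΔ
    cases hΔ with
    | some hC =>
      cases hC with
      | and h₁ h₂ => exact Cl.andR (ih₁ hΓ (.some h₁)) (ih₂ hΓ (.some h₂))
  | orL d₁ d₂ ih₁ ih₂ =>
    intro Γc Δc hΓ hΔ
    cases hΓ with
    | cons hB hrest =>
      cases hB with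
      | or h₁ h₂ => exact Cl.orL (ih₁ (.cons h₁ hrest) hΔ) (ih₂ (.cons h₂ hrest) hΔ)
  | orR1 d ih =>
    intro Γc Δc hΓ hΔ
    cases hΔ with
    | some hC =>
      cases hC with
      | or h₁ h₂ => exact Cl.orR1 (ih hΓ (.some h₁))
  | orR2 d ih =>
    intro Γc Δc hΓ hΔ
    cases hΔ with
    | some hC =>
      cases hC with
      | or h₁ h₂ => exact Cl.orR2 (ih hΓ (.some h₂))
  | impL d₁ d₂ ih₁ ih₂ =>
    intro Γc Δc hΓ hΔ
    cases hΓ with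
    | cons hB hrest =>
      cases hB with
      | imp h₁ h₂ =>
        have ha := ih₁ hrest (.some h₁)
        have hb := ih₂ (.cons h₂ hrest) hΔ
        refine Cl.impL ?_ hb
        cases Δc with
        | none => exact ha
        | some D => exact Cl.exchR (Cl.weakR ha)
  | impR d ih =>
    intro Γc Δc hΓ hΔ
    cases hΔ with
    | some hC =>
      cases hC with
      | imp h₁ h₂ => exact Cl.impR (ih (.cons h₁ hΓ) (.some h₂))
  | allL t d ih =>
    intro Γc Δc hΓ hΔ
    cases hΓ with
    | cons hB hrest =>
      cases hB with
      | all h₀ => exact Cl.allL t (ih (.cons (R_inst h₀ t) hrest) hΔ)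
  | allR d ih =>
    intro Γc Δc hΓ hΔ
    cases hΔ with
    | some hC =>
      cases hC with
      | all h₀ =>
        apply Cl.allR
        exact ih (forall₂_shift hΓ) (.some h₀)
  | exL d ih =>
    intro Γc Δc hΓ hΔ
    cases hΓ with
    | cons hB hrest =>
      cases hB with
      | ex h₀ =>
        apply Cl.exL
        have h := ih (.cons h₀ (forall₂_shift hrest)) (orel_shift hΔ)
        rw [olist_map] at h
        exact h
  | exR t d ih =>
    intro Γc Δc hΓ hΔ
    cases hΔ with
    | some hC =>
      cases hC with
      | ex h₀ => exact Cl.exR t (ih hΓ (.some (R_inst h₀ t)))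

theorem intu_fold_to_cl (Γ : List Fm) (A : Fm)
    (h : Intu [] (some (Γ.foldr (fun H acc => Fm.impc H.bar acc) A.bar))) : Cl Γ [A] := by
  have h2 : Cl [] (olist (some (Γ.foldr Fm.imp A))) :=
    intu_to_cl h List.Forall₂.nil (ORel.some (R_fold A Γ))
  have h3 := cl_unfold_imp A Γ [] h2
  simpa using h3
/-! ### Structural lemmas for `Intu` -/

namespace Intu

theorem pl {Γ Γ' : List Fm} {Δ : Option Fm} (h : Γ.Perm Γ') (d : Intu Γ Δ) : Intu Γ' Δ :=
  Intu.perm h d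

theorem exchL {A B : Fm} {Γ : List Fm} {Δ : Option Fm} (d : Intu (A :: B :: Γ) Δ) :
    Intu (B :: A :: Γ) Δ := d.pl (List.Perm.swap B A Γ)

theorem rot3L {A B C : Fm} {Γ : List Fm} {Δ : Option Fm} (d : Intu (A :: B :: C :: Γ) Δ) :
    Intu (B :: C :: A :: Γ) Δ := (d.exchL).pl ((List.Perm.swap C A Γ).cons B)

theorem toMidL (Ξ : List Fm) {A : Fm} {Γ : List Fm} {Δ : Option Fm}
    (d : Intu (A :: (Ξ ++ Γ)) Δ) : Intu (Ξ ++ A :: Γ) Δ := d.pl List.perm_middle.symm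

theorem fromMidL (Ξ : List Fm) {A : Fm} {Γ : List Fm} {Δ : Option Fm}
    (d : Intu (Ξ ++ A :: Γ) Δ) : Intu (A :: (Ξ ++ Γ)) Δ := d.pl List.perm_middle

theorem nnL {X : Fm} {Γ : List Fm} (d : Intu (X :: Γ) none) :
    Intu (.neg (.neg X) :: Γ) none := Intu.negL (Intu.negR d)

theorem dnR {X : Fm} {Γ : List Fm} (d : Intu Γ (some X)) :
    Intu Γ (some (.neg (.neg X))) := Intu.negR (Intu.negL d)

theorem restoreM (Ξ : List Fm) {Y B : Fm} {Γ : List Fm} {Δ : Option Fm}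
    (d : Intu (Ξ ++ del Y (B :: Γ)) Δ) : Intu (Ξ ++ B :: del Y Γ) Δ := by
  by_cases h : B = Y
  · rw [del_cons_eq h] at d
    exact Intu.toMidL Ξ (Intu.weakL d)
  · rwa [del_cons_ne h] at d

/-! ### Inversion of the right negation rule in `Intu` -/

theorem invNegR : ∀ {Γ : List Fm} {Δ : Option Fm}, Intu Γ Δ →
    ∀ X, Δ = some (.neg X) → Intu (X :: Γ) none := by
  intro Γ Δ d
  induction d with
  | ax A =>
    intro X hX
    injection hX with hX
    subst hX
    exact (Intu.negL (Intu.ax X)).pl (List.Perm.swap X (.neg X) [])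
  | perm hp d ih => intro X hX; exact (ih X hX).pl (hp.cons X)
  | contrL d ih => intro X hX; exact Intu.exchL (Intu.contrL (Intu.rot3L (ih X hX)))
  | weakL d ih => intro X hX; exact Intu.exchL (Intu.weakL (ih X hX))
  | weakR d ih => intro X hX; exact Intu.weakL d
  | topR => intro X hX; injection hX with h2; exact absurd h2 (by simp)
  | botL => intro X hX; exact Intu.exchL Intu.botL
  | negL d => intro X hX; cases hX
  | negR d ih =>
    intro X hX
    injection hX with h2
    injection h2 with h3
    subst h3
    exact d
  | andL d ih => intro X hX; exact Intu.exchL (Intu.andL (Intu.rot3L (ih X hX)))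
  | andR d₁ d₂ ih₁ ih₂ => intro X hX; injection hX with h2; exact absurd h2 (by simp)
  | orL d₁ d₂ ih₁ ih₂ =>
    intro X hX
    exact Intu.exchL (Intu.orL (Intu.exchL (ih₁ X hX)) (Intu.exchL (ih₂ X hX)))
  | orR1 d ih => intro X hX; injection hX with h2; exact absurd h2 (by simp)
  | orR2 d ih => intro X hX; injection hX with h2; exact absurd h2 (by simp)
  | impL d₁ d₂ ih₁ ih₂ =>
    intro X hX
    exact Intu.exchL (Intu.impL (Intu.weakL d₁) (Intu.exchL (ih₂ X hX)))
  | impR d ih => intro X hX; injection hX with h2; exact absurd h2 (by simp)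
  | allL t d ih => intro X hX; exact Intu.exchL (Intu.allL t (Intu.exchL (ih X hX)))
  | allR d ih => intro X hX; injection hX with h2; exact absurd h2 (by simp)
  | exL d ih =>
    intro X hX
    subst hX
    exact Intu.exchL (Intu.exL (Intu.exchL (ih (Fm.shift X) rfl)))
  | exR t d ih => intro X hX; injection hX with h2; exact absurd h2 (by simp)

/-! ### Removing a doubly negated hypothesis -/

theorem dnStr : ∀ {Γ : List Fm} {Δ : Option Fm}, Intu Γ Δ →
    ∀ X, Intu (X :: del (.neg (.neg X)) Γ) Δ := by
  intro Γ Δ d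
  induction d with
  | ax A =>
    intro X
    by_cases h : A = .neg (.neg X)
    · subst h
      rw [del_cons_eq rfl, del_nil]
      exact Intu.dnR (Intu.ax X)
    · rw [del_cons_ne h, del_nil]
      exact Intu.weakL (Intu.ax A)
  | perm hp d ih => intro X; exact (ih X).pl ((del_perm _ hp).cons X)
  | @contrL Γ Δ A d ih =>
    intro X
    by_cases h : A = .neg (.neg X)
    · rw [del_cons_eq h]
      have h' := ih X
      rw [del_cons_eq h, del_cons_eq h] at h'
      exact h'
    · rw [del_cons_ne h]
      have h' := ih X
      rw [del_cons_ne h, del_cons_ne h] at h'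
      exact Intu.exchL (Intu.contrL (Intu.rot3L h'))
  | @weakL Γ Δ A d ih =>
    intro X
    by_cases h : A = .neg (.neg X)
    · rw [del_cons_eq h]; exact ih X
    · rw [del_cons_ne h]; exact Intu.exchL (Intu.weakL (ih X))
  | weakR d ih => intro X; exact Intu.weakR (ih X)
  | topR => intro X; exact Intu.topR
  | botL => intro X; rw [del_cons_ne (by simp)]; exact Intu.exchL Intu.botL
  | @negL Γ A d ih =>
    intro X
    by_cases h : Fm.neg A = .neg (.neg X)
    · have hA : A = .neg X := by injection h
      rw [del_cons_eq h]
      subst hA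
      exact Intu.contrL (Intu.invNegR (ih X) X rfl)
    · rw [del_cons_ne h]
      exact Intu.exchL (Intu.negL (ih X))
  | @negR Γ A d ih =>
    intro X
    exact Intu.negR (Intu.exchL (Intu.restoreM [X] (ih X)))
  | @andL Γ Δ A B d ih =>
    intro X
    rw [del_cons_ne (by simp)]
    have h' := Intu.restoreM [X, A] (Intu.restoreM [X] (ih X))
    exact Intu.exchL (Intu.andL (Intu.rot3L h'))
  | andR d₁ d₂ ih₁ ih₂ => intro X; exact Intu.andR (ih₁ X) (ih₂ X)
  | @orL Γ Δ A B d₁ d₂ ih₁ ih₂ =>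
    intro X
    rw [del_cons_ne (by simp)]
    have h₁ := Intu.exchL (Intu.restoreM [X] (ih₁ X))
    have h₂ := Intu.exchL (Intu.restoreM [X] (ih₂ X))
    exact Intu.exchL (Intu.orL h₁ h₂)
  | orR1 d ih => intro X; exact Intu.orR1 (ih X)
  | orR2 d ih => intro X; exact Intu.orR2 (ih X)
  | @impL Γ Δ A B d₁ d₂ ih₁ ih₂ =>
    intro X
    rw [del_cons_ne (by simp)]
    have h₂ := Intu.exchL (Intu.restoreM [X] (ih₂ X))
    exact Intu.exchL (Intu.impL (ih₁ X) h₂)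
  | impR d ih =>
    intro X
    exact Intu.impR (Intu.exchL (Intu.restoreM [X] (ih X)))
  | @allL Γ Δ A t d ih =>
    intro X
    rw [del_cons_ne (by simp)]
    exact Intu.exchL (Intu.allL t (Intu.exchL (Intu.restoreM [X] (ih X))))
  | @allR Γ A d ih =>
    intro X
    have h := ih (Fm.shift X)
    rw [show Fm.neg (Fm.neg (Fm.shift X)) = Fm.shift (.neg (.neg X)) from rfl,
      del_map Fm.shift_inj] at h
    exact Intu.allR (by simpa using h)
  | @exL Γ Δ A d ih =>
    intro X
    rw [del_cons_ne (by simp)]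
    have h := Intu.restoreM [Fm.shift X] (ih (Fm.shift X))
    rw [show Fm.neg (Fm.neg (Fm.shift X)) = Fm.shift (.neg (.neg X)) from rfl,
      del_map Fm.shift_inj] at h
    exact Intu.exchL (Intu.exL (by simpa using (Intu.exchL h)))
  | exR t d ih => intro X; exact Intu.exR t (ih X)

end Intu
/-! ### The translations commute with renaming and substitution -/

theorem Fm.bar_rename : ∀ (A : Fm) (f : Nat → Nat), (A.rename f).bar = A.bar.rename f := by
  intro A
  induction A with
  | atom p l => intro f; rfl
  | top => intro f; rfl
  | bot => intro f; rfl
  | neg A ih => intro f; simp [Fm.rename, Fm.bar, Fm.dn, ih]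
  | and A B ihA ihB => intro f; simp [Fm.rename, Fm.bar, Fm.dn, ihA, ihB]
  | or A B ihA ihB => intro f; simp [Fm.rename, Fm.bar, Fm.dn, ihA, ihB]
  | imp A B ihA ihB => intro f; simp [Fm.rename, Fm.bar, Fm.dn, ihA, ihB]
  | all A ih => intro f; simp [Fm.rename, Fm.bar, Fm.dn, ih]
  | ex A ih => intro f; simp [Fm.rename, Fm.bar, Fm.dn, ih]

theorem Fm.bar_subst : ∀ (A : Fm) (σ : Nat → Tm), (A.subst σ).bar = A.bar.subst σ := by
  intro A
  induction A with
  | atom p l => intro σ; rfl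
  | top => intro σ; rfl
  | bot => intro σ; rfl
  | neg A ih => intro σ; simp [Fm.subst, Fm.bar, Fm.dn, ih]
  | and A B ihA ihB => intro σ; simp [Fm.subst, Fm.bar, Fm.dn, ihA, ihB]
  | or A B ihA ihB => intro σ; simp [Fm.subst, Fm.bar, Fm.dn, ihA, ihB]
  | imp A B ihA ihB => intro σ; simp [Fm.subst, Fm.bar, Fm.dn, ihA, ihB]
  | all A ih => intro σ; simp [Fm.subst, Fm.bar, Fm.dn, ih]
  | ex A ih => intro σ; simp [Fm.subst, Fm.bar, Fm.dn, ih]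

theorem Fm.bar_shift (A : Fm) : (Fm.shift A).bar = Fm.shift A.bar := Fm.bar_rename A Nat.succ

theorem Fm.bar_inst (A : Fm) (t : Tm) : (A.inst t).bar = A.bar.inst t := Fm.bar_subst A _

theorem Fm.light_rename (A : Fm) (f : Nat → Nat) : (A.rename f).light = A.light.rename f := by
  cases A with
  | atom p l => rfl
  | top => rfl
  | bot => rfl
  | neg A => simp [Fm.rename, Fm.light, Fm.dn, Fm.bar_rename]
  | and A B => simp [Fm.rename, Fm.light, Fm.dn, Fm.bar_rename]
  | or A B => simp [Fm.rename, Fm.light, Fm.dn, Fm.bar_rename]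
  | imp A B => simp [Fm.rename, Fm.light, Fm.dn, Fm.bar_rename]
  | all A => simp [Fm.rename, Fm.light, Fm.dn, Fm.bar_rename]
  | ex A => simp [Fm.rename, Fm.light, Fm.dn, Fm.bar_rename]

theorem Fm.light_shift (A : Fm) : (Fm.shift A).light = Fm.shift A.light :=
  Fm.light_rename A Nat.succ

/-- translation of conclusions -/
def nl (D : Fm) : Fm := .neg D.light

theorem nl_shift (D : Fm) : nl (Fm.shift D) = Fm.shift (nl D) := by
  simp [nl, Fm.shift, Fm.rename, Fm.light_rename]

theorem map_bar_shift (Γ : List Fm) :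
    (Γ.map Fm.shift).map Fm.bar = (Γ.map Fm.bar).map Fm.shift := by
  rw [List.map_map, List.map_map]
  exact List.map_congr_left (fun A _ => Fm.bar_shift A)

theorem map_nl_shift (Δ : List Fm) :
    (Δ.map Fm.shift).map nl = (Δ.map nl).map Fm.shift := by
  rw [List.map_map, List.map_map]
  exact List.map_congr_left (fun A _ => nl_shift A)

/-- `¬|A|` on the left may be strengthened to `¬‖A‖`. -/
theorem nbl : ∀ {A : Fm} {Γ : List Fm}, Intu (.neg A.light :: Γ) none →
    Intu (.neg A.bar :: Γ) none := by
  intro A Γ h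
  cases A with
  | atom p l => exact h
  | top => exact Intu.nnL h
  | bot => exact Intu.nnL h
  | neg A => exact Intu.nnL h
  | and A B => exact Intu.nnL h
  | or A B => exact Intu.nnL h
  | imp A B => exact Intu.nnL h
  | all A => exact Intu.nnL h
  | ex A => exact Intu.nnL h

theorem dn_inst (A : Fm) (t : Tm) :
    (Fm.dn A.bar).inst t = Fm.dn ((A.inst t).bar) := by
  simp only [Fm.inst, Fm.dn, Fm.subst]
  rw [← Fm.bar_subst]

/-! ### The Kolmogorov-style translation of classical proofs -/

theorem kolmogorov : ∀ {Γ Δ : List Fm}, Cl Γ Δ →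
    Intu (Γ.map Fm.bar ++ Δ.map nl) none := by
  intro Γ Δ d
  induction d with
  | ax A =>
    show Intu [A.bar, .neg A.light] none
    cases A with
    | atom p l => exact Intu.exchL (Intu.negL (Intu.ax _))
    | top => exact Intu.negL (Intu.ax _)
    | bot => exact Intu.negL (Intu.ax _)
    | neg A => exact Intu.negL (Intu.ax _)
    | and A B => exact Intu.negL (Intu.ax _)
    | or A B => exact Intu.negL (Intu.ax _)
    | imp A B => exact Intu.negL (Intu.ax _)
    | all A => exact Intu.negL (Intu.ax _)
    | ex A => exact Intu.negL (Intu.ax _)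
  | perm hΓ hΔ d ih =>
    exact ih.pl ((hΓ.map Fm.bar).append (hΔ.map nl))
  | contrL d ih => exact Intu.contrL ih
  | @contrR Γ Δ A d ih =>
    have h := (Intu.fromMidL (Γ.map Fm.bar) ih).pl (List.perm_middle.cons _)
    exact Intu.toMidL _ (Intu.contrL h)
  | weakL d ih => exact Intu.weakL ih
  | weakR d ih => exact Intu.toMidL _ (Intu.weakL ih)
  | topR => exact Intu.toMidL _ (Intu.negL Intu.topR)
  | botL => exact Intu.nnL Intu.botL
  | @negL Γ Δ A d ih =>
    apply Intu.nnL
    apply Intu.nnL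
    apply nbl
    exact Intu.fromMidL _ ih
  | @negR Γ Δ A d ih =>
    apply Intu.toMidL
    apply Intu.nnL
    apply Intu.nnL
    exact ih
  | @andL Γ Δ A B d ih =>
    exact Intu.nnL (Intu.andL (Intu.exchL (Intu.nnL (Intu.exchL (Intu.nnL ih)))))
  | @andR Γ Δ A B d₁ d₂ ih₁ ih₂ =>
    apply Intu.toMidL
    apply Intu.negL
    apply Intu.andR
    · exact Intu.negR (nbl (Intu.fromMidL _ ih₁))
    · exact Intu.negR (nbl (Intu.fromMidL _ ih₂))
  | @orL Γ Δ A B d₁ d₂ ih₁ ih₂ =>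
    exact Intu.nnL (Intu.orL (Intu.nnL ih₁) (Intu.nnL ih₂))
  | @orR1 Γ Δ A B d ih =>
    apply Intu.toMidL
    apply Intu.negL
    apply Intu.orR1
    exact Intu.negR (nbl (Intu.fromMidL _ ih))
  | @orR2 Γ Δ A B d ih =>
    apply Intu.toMidL
    apply Intu.negL
    apply Intu.orR2
    exact Intu.negR (nbl (Intu.fromMidL _ ih))
  | @impL Γ Δ A B d₁ d₂ ih₁ ih₂ =>
    apply Intu.nnL
    apply Intu.impL
    · exact Intu.negR (nbl (Intu.fromMidL _ ih₁))
    · exact Intu.nnL ih₂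
  | @impR Γ Δ A B d ih =>
    apply Intu.toMidL
    apply Intu.negL
    apply Intu.impR
    have h0 := ih.pl (List.perm_middle.cons (Fm.bar A))
    have h6 := Intu.negR (Intu.exchL (Intu.nnL (Intu.exchL (nbl (Intu.exchL h0)))))
    exact h6
  | @allL Γ Δ A t d ih =>
    apply Intu.nnL
    apply Intu.allL t
    rw [dn_inst]
    exact Intu.nnL ih
  | @allR Γ Δ A d ih =>
    apply Intu.toMidL
    apply Intu.negL
    apply Intu.allR
    apply Intu.negR
    apply nbl
    show Intu (.neg A.light :: List.map Fm.shift (List.map Fm.bar Γ ++ List.map nl Δ)) none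
    rw [List.map_append, ← map_bar_shift, ← map_nl_shift]
    exact Intu.fromMidL _ ih
  | @exL Γ Δ A d ih =>
    apply Intu.nnL
    apply Intu.exL
    show Intu (Fm.dn A.bar :: List.map Fm.shift (List.map Fm.bar Γ ++ List.map nl Δ)) none
    rw [List.map_append, ← map_bar_shift, ← map_nl_shift]
    exact Intu.nnL ih
  | @exR Γ Δ A t d ih =>
    apply Intu.toMidL
    apply Intu.negL
    apply Intu.exR t
    rw [dn_inst]
    apply Intu.negR
    apply nbl
    exact Intu.fromMidL _ ih
/-! ### Folding up the translated sequent into the iterated classical implication -/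

theorem fold_neg (A : Fm) : ∀ (Γ Ctx : List Fm),
    Intu (Ctx ++ Γ.map Fm.bar ++ [.neg A.light]) none →
    Intu (.neg (Γ.foldr (fun H acc => Fm.impc H.bar acc) A.bar) :: Ctx) none
  | [], Ctx, h => by
    apply nbl
    have h1 : Intu (Ctx ++ [Fm.neg A.light]) none := by simpa using h
    have h2 := Intu.fromMidL Ctx h1
    simpa using h2
  | H :: Γ, Ctx, h => by
    show Intu (.neg (Fm.dn (.imp (Fm.dn H.bar)
      (Fm.dn (Γ.foldr (fun H acc => Fm.impc H.bar acc) A.bar)))) :: Ctx) none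
    apply Intu.nnL
    apply Intu.negL
    apply Intu.impR
    apply Intu.negR
    refine Intu.exchL (Intu.nnL (Intu.exchL ?_))
    apply fold_neg A Γ (H.bar :: Ctx)
    exact h.pl (List.perm_middle.append_right _)

theorem neg_dn_elim {W : Fm} (h : Intu [.neg (Fm.dn W)] none) : Intu [] (some (Fm.dn W)) := by
  have h2 := Intu.dnStr h (.neg W)
  rw [del_cons_eq (show Fm.neg (Fm.dn W) = Fm.neg (Fm.neg (Fm.neg W)) from rfl), del_nil] at h2
  exact Intu.negR h2

theorem cl_to_intu_fold : ∀ (Γ : List Fm) (A : Fm), Cl Γ [A] →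
    Intu [] (some (Γ.foldr (fun H acc => Fm.impc H.bar acc) A.bar))
  | [], A, d => by
    have hk := kolmogorov d
    have hf := fold_neg A [] [] (by simpa [nl] using hk)
    show Intu [] (some A.bar)
    cases A with
    | atom p l => exact absurd d (no_cl_atom p l)
    | top => exact neg_dn_elim hf
    | bot => exact neg_dn_elim hf
    | neg A => exact neg_dn_elim hf
    | and A B => exact neg_dn_elim hf
    | or A B => exact neg_dn_elim hf
    | imp A B => exact neg_dn_elim hf
    | all A => exact neg_dn_elim hf
    | ex A => exact neg_dn_elim hf
  | H :: Γ, A, d => by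
    have hk := kolmogorov d
    have hf := fold_neg A (H :: Γ) [] (by simpa [nl] using hk)
    exact neg_dn_elim hf

theorem stmt5 (Γ : List Fm) (A : Fm) :
    Cl Γ [A] ↔
      Intu [] (some (Γ.foldr (fun H acc => Fm.impc H.bar acc) A.bar)) := by
  constructor
  · exact cl_to_intu_fold Γ A
  · exact intu_fold_to_cl Γ A
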